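/- Let A, B be n×n complex matrices with (A,B) of maximal rank, and U unitary such that there exists an invertible C with AU = CA and BU = CB. Then for every z with Bz ∈ Ran A ∩ Ran B, one has U A⋆B z = A⋆B U z (i.e., the commutator [U, A⋆B] vanishes on B^{-1}(Ran A ∩ Ran B)). -/

import Mathlib

open Matrix

/-- `X` satisfies the four Penrose conditions for `A`. -/
def IsMoorePenrose {n : ℕ} (A X : Matrix (Fin n) (Fin n) ℂ) : Prop :=
  A * X * A = A ∧ X * A * X = X ∧ (A * X)ᴴ = A * X ∧ (X * A)ᴴ = X * A

/-- If `(A,B)` has maximal rank, `U` is unitary and there is an invertible `C` with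
`AU = CA`, `BU = CB`, then the commutator `[U, A⋆B]` vanishes on `B⁻¹(Ran A ∩ Ran B)`. -/
theorem stmt_10 (n : ℕ) (A B Astar U C : Matrix (Fin n) (Fin n) ℂ)
    (hrank : (Matrix.fromCols A B).rank = n)
    (hMPA : IsMoorePenrose A Astar)
    (hU : U ∈ Matrix.unitaryGroup (Fin n) ℂ)
    (hC : IsUnit C) (hCA : A * U = C * A) (hCB : B * U = C * B) :
    ∀ z : Fin n → ℂ,
      B.mulVec z ∈ LinearMap.range A.mulVecLin ⊓ LinearMap.range B.mulVecLin →
      (U * (Astar * B)).mulVec z = ((Astar * B) * U).mulVec z := by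
  obtain ⟨h1, h2, h3, h4⟩ := hMPA
  have hUU : U * Uᴴ = 1 := by
    have := (Matrix.mem_unitaryGroup_iff).mp hU
    simpa [Matrix.star_eq_conjTranspose] using this
  set P : Matrix (Fin n) (Fin n) ℂ := Astar * A with hPdef
  have hPH : Pᴴ = P := h4
  have hCAU : C * (A * Uᴴ) = A := by
    calc C * (A * Uᴴ) = (C * A) * Uᴴ := by rw [mul_assoc]
    _ = A * (U * Uᴴ) := by rw [← hCA, mul_assoc]
    _ = A := by rw [hUU, mul_one]
  have hAUP : A * (Uᴴ * P) = A * Uᴴ := by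
    apply hC.mul_left_cancel
    calc C * (A * (Uᴴ * P)) = (C * (A * Uᴴ)) * P := by simp only [mul_assoc]
    _ = A * P := by rw [hCAU]
    _ = A := by rw [hPdef, ← mul_assoc, h1]
    _ = C * (A * Uᴴ) := hCAU.symm
  have hAUP2 : A * (U * P) = A * U := by
    calc A * (U * P) = (A * U) * P := by simp only [mul_assoc]
    _ = C * (A * P) := by rw [hCA, mul_assoc]
    _ = C * A := by rw [hPdef, ← mul_assoc A Astar A, h1]
    _ = A * U := hCA.symm
  have h5 : P * (Uᴴ * P) = P * Uᴴ := by
    calc P * (Uᴴ * P) = Astar * (A * (Uᴴ * P)) := by simp only [hPdef, mul_assoc]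
    _ = Astar * (A * Uᴴ) := by rw [hAUP]
    _ = P * Uᴴ := by simp only [hPdef, mul_assoc]
  have h6 : P * U * P = P * U := by
    have : P * (U * P) = P * U := by
      calc P * (U * P) = Astar * (A * (U * P)) := by simp only [hPdef, mul_assoc]
      _ = Astar * (A * U) := by rw [hAUP2]
      _ = P * U := by simp only [hPdef, mul_assoc]
    simpa only [← mul_assoc] using this
  have h7 : P * U * P = U * P := by
    have h7' := congrArg Matrix.conjTranspose h5
    simp only [Matrix.conjTranspose_mul, Matrix.conjTranspose_conjTranspose, hPH] at h7'
    simpa only [← mul_assoc] using h7'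
  have comm : U * P = P * U := h7.symm.trans h6
  intro z hz
  obtain ⟨⟨w, hw⟩, -⟩ := hz
  have hw' : A.mulVec w = B.mulVec z := by simpa using hw
  calc (U * (Astar * B)).mulVec z
      = U.mulVec (Astar.mulVec (A.mulVec w)) := by
        simp only [← Matrix.mulVec_mulVec, ← hw']
    _ = (U * P).mulVec w := by simp only [hPdef, Matrix.mulVec_mulVec, mul_assoc]
    _ = (P * U).mulVec w := by rw [comm]
    _ = Astar.mulVec ((A * U).mulVec w) := by
        simp only [hPdef, ← Matrix.mulVec_mulVec, mul_assoc]
    _ = Astar.mulVec ((C * A).mulVec w) := by rw [hCA]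
    _ = Astar.mulVec (C.mulVec (B.mulVec z)) := by
        simp only [← Matrix.mulVec_mulVec, hw']
    _ = ((Astar * B) * U).mulVec z := by
        rw [mul_assoc, hCB]
        simp only [← Matrix.mulVec_mulVec]
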